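/- For every θ ∈ (0,1) and every r ≥ 0 with θ ≤ 1/(1+e^r), it holds that −θr + log(1−θ+θe^r) ≤ (r²/2) · θ(1−θ)e^r / (1−θ+θe^r)². -/

import Mathlib

/-- Sharpened Hoeffding-lemma exponent bound for small `θ`:
if `θ ≤ 1/(1+e^r)` then `-θr + log(1-θ+θe^r) ≤ (r²/2)·θ(1-θ)e^r/(1-θ+θe^r)²`. -/
theorem phi_le_of_theta_small (θ r : ℝ) (hθ : θ ∈ Set.Ioo (0 : ℝ) 1) (hr : 0 ≤ r)
    (hθr : θ ≤ 1 / (1 + Real.exp r)) :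
    -θ * r + Real.log (1 - θ + θ * Real.exp r) ≤
      r ^ 2 / 2 * (θ * (1 - θ) * Real.exp r / (1 - θ + θ * Real.exp r) ^ 2) := by
  obtain ⟨hθ0, hθ1⟩ := hθ
  set c : ℝ := θ * (1 - θ) * Real.exp r / (1 - θ + θ * Real.exp r) ^ 2 with hc
  have hD : ∀ x : ℝ, 0 < 1 - θ + θ * Real.exp x := fun x => by
    nlinarith [Real.exp_pos x]
  -- constraint: θ * exp r ≤ 1 - θ
  have hcon : θ * Real.exp r ≤ 1 - θ := by
    have h1 : 0 < 1 + Real.exp r := by positivity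
    have h2 := (le_div_iff₀ h1).mp hθr
    nlinarith
  -- derivative of the inner function
  have hg : ∀ x : ℝ, HasDerivAt (fun y => 1 - θ + θ * Real.exp y) (θ * Real.exp x) x :=
    fun x => ((Real.hasDerivAt_exp x).const_mul θ).const_add (1 - θ)
  -- φ and its derivative
  have hf' : ∀ x : ℝ, HasDerivAt (fun y => -θ * y + Real.log (1 - θ + θ * Real.exp y))
      (-θ + θ * Real.exp x / (1 - θ + θ * Real.exp x)) x := by
    intro x
    have h1 : HasDerivAt (fun y : ℝ => -θ * y) (-θ) x := by
      simpa using (hasDerivAt_id x).const_mul (-θ)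
    have h2 := (hg x).log (hD x).ne'
    exact h1.add h2
  -- φ' and its derivative φ''
  have hf'' : ∀ x : ℝ, HasDerivAt (fun y => -θ + θ * Real.exp y / (1 - θ + θ * Real.exp y))
      (θ * (1 - θ) * Real.exp x / (1 - θ + θ * Real.exp x) ^ 2) x := by
    intro x
    have hnum : HasDerivAt (fun y : ℝ => θ * Real.exp y) (θ * Real.exp x) x :=
      (Real.hasDerivAt_exp x).const_mul θ
    have h := (hnum.div (hg x) (hD x).ne').const_add (-θ)
    refine h.congr_deriv ?_
    have := (hD x).ne'
    ring
  -- φ'' is at most c on [0, r]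
  have key : ∀ x ∈ Set.Icc (0:ℝ) r,
      θ * (1 - θ) * Real.exp x / (1 - θ + θ * Real.exp x) ^ 2 ≤ c := by
    intro x hx
    obtain ⟨hx0, hxr⟩ := hx
    have h1 : (1:ℝ) ≤ Real.exp x := Real.one_le_exp hx0
    have h2 : Real.exp x ≤ Real.exp r := Real.exp_le_exp.mpr hxr
    rw [hc, div_le_div_iff₀ (pow_pos (hD x) 2) (pow_pos (hD r) 2)]
    have hts : θ * Real.exp x ≤ 1 - θ := le_trans (by nlinarith [Real.exp_pos x]) hcon
    have hprod : 0 ≤ (Real.exp r - Real.exp x) *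
        ((1 - θ) ^ 2 - θ ^ 2 * (Real.exp x * Real.exp r)) := by
      apply mul_nonneg (sub_nonneg.mpr h2)
      nlinarith [mul_pos hθ0 (Real.exp_pos x), mul_pos hθ0 (Real.exp_pos r)]
    nlinarith [mul_nonneg (mul_nonneg hθ0.le (sub_nonneg.mpr hθ1.le)) hprod]
  -- Step A : φ'(x) ≤ c * x on [0, r]
  have hG : ∀ x : ℝ, HasDerivAt
      (fun y => c * y - (-θ + θ * Real.exp y / (1 - θ + θ * Real.exp y)))
      (c - (θ * (1 - θ) * Real.exp x / (1 - θ + θ * Real.exp x) ^ 2)) x := by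
    intro x
    have h1 : HasDerivAt (fun y : ℝ => c * y) c x := by
      simpa using (hasDerivAt_id x).const_mul c
    exact h1.sub (hf'' x)
  have hGmono : MonotoneOn
      (fun y => c * y - (-θ + θ * Real.exp y / (1 - θ + θ * Real.exp y)))
      (Set.Icc 0 r) := by
    apply monotoneOn_of_deriv_nonneg (convex_Icc 0 r)
    · exact fun x _ => (hG x).continuousAt.continuousWithinAt
    · exact fun x _ => (hG x).differentiableAt.differentiableWithinAt
    · intro x hx
      rw [interior_Icc] at hx
      rw [(hG x).deriv]
      have := key x ⟨hx.1.le, hx.2.le⟩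
      linarith
  have stepA : ∀ x ∈ Set.Icc (0:ℝ) r,
      -θ + θ * Real.exp x / (1 - θ + θ * Real.exp x) ≤ c * x := by
    intro x hx
    have h0 : (0:ℝ) ∈ Set.Icc (0:ℝ) r := ⟨le_refl 0, hr⟩
    have := hGmono h0 hx hx.1
    simp only [Real.exp_zero, mul_one, mul_zero] at this
    have h11 : (1:ℝ) - θ + θ = 1 := by ring
    rw [h11] at this
    simp at this
    linarith
  -- Step B : φ(r) ≤ c/2 * r²
  have hH : ∀ x : ℝ, HasDerivAt
      (fun y => c / 2 * y ^ 2 - (-θ * y + Real.log (1 - θ + θ * Real.exp y)))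
      (c * x - (-θ + θ * Real.exp x / (1 - θ + θ * Real.exp x))) x := by
    intro x
    have h1 : HasDerivAt (fun y : ℝ => c / 2 * y ^ 2) (c * x) x := by
      have := (hasDerivAt_pow 2 x).const_mul (c / 2)
      refine this.congr_deriv ?_
      rw [show (2:ℕ) - 1 = 1 from rfl]
      ring
    exact h1.sub (hf' x)
  have hHmono : MonotoneOn
      (fun y => c / 2 * y ^ 2 - (-θ * y + Real.log (1 - θ + θ * Real.exp y)))
      (Set.Icc 0 r) := by
    apply monotoneOn_of_deriv_nonneg (convex_Icc 0 r)
    · exact fun x _ => (hH x).continuousAt.continuousWithinAt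
    · exact fun x _ => (hH x).differentiableAt.differentiableWithinAt
    · intro x hx
      rw [interior_Icc] at hx
      rw [(hH x).deriv]
      have := stepA x ⟨hx.1.le, hx.2.le⟩
      linarith
  have h0 : (0:ℝ) ∈ Set.Icc (0:ℝ) r := ⟨le_refl 0, hr⟩
  have hrr : r ∈ Set.Icc (0:ℝ) r := ⟨hr, le_refl r⟩
  have hfin := hHmono h0 hrr hr
  simp only [Real.exp_zero, mul_one, mul_zero, neg_zero, zero_add] at hfin
  have h11 : (1:ℝ) - θ + θ = 1 := by ring
  rw [h11, Real.log_one] at hfin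
  norm_num at hfin
  linarith
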